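/- Laplace asymptotics for the integral ∫_ℝ exp(−λ(e^u − u − 1)) du: as λ → +∞, √λ · ∫_ℝ exp(−λ·(exp(u) − u − 1)) du tends to √(2π). -/

import Mathlib

open Filter Topology MeasureTheory

/-- quadratic lower bound for nonneg arguments -/
lemma lq_pos {t : ℝ} (ht : 0 ≤ t) : t^2/4 ≤ Real.exp t - t - 1 := by
  have h1 : 1 + t/2 ≤ Real.exp (t/2) := by linarith [Real.add_one_le_exp (t/2)]
  have h2 : Real.exp (t/2) * Real.exp (t/2) = Real.exp t := by
    rw [← Real.exp_add]; ring_nf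
  nlinarith [Real.exp_pos (t/2)]

lemma taylor2 {t : ℝ} (ht : |t| ≤ 1) :
    |Real.exp t - t - 1 - t^2/2| ≤ |t|^3 * (2/9) := by
  have h := Real.exp_bound ht (n := 3) (by norm_num)
  have hsum : ∑ m ∈ Finset.range 3, t ^ m / m.factorial = 1 + t + t^2/2 := by
    norm_num [Finset.sum_range_succ, Nat.factorial]
  rw [hsum] at h
  have he : Real.exp t - t - 1 - t^2/2 = Real.exp t - (1 + t + t^2/2) := by ring
  rw [he]
  convert h using 2
  norm_num [Nat.factorial]

lemma lower_quad {t : ℝ} (ht : |t| ≤ 1) : t^2/4 ≤ Real.exp t - t - 1 := by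
  have h := taylor2 ht
  have h3 : |t|^3 ≤ t^2 := by
    have : |t|^3 = |t| * |t|^2 := by ring
    rw [this, sq_abs]
    nlinarith [abs_nonneg t, sq_nonneg t]
  rw [abs_le] at h
  nlinarith

lemma lower_lin {t : ℝ} (ht : t ≤ -1) : -t/4 ≤ Real.exp t - t - 1 := by
  rcases le_or_gt t (-4/3) with h | h
  · nlinarith [Real.exp_pos t]
  · have h1 : Real.exp (-1) * (t + 2) ≤ Real.exp t := by
      have := Real.add_one_le_exp (t + 1)
      calc Real.exp (-1) * (t + 2) ≤ Real.exp (-1) * Real.exp (t+1) := by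
            nlinarith [Real.exp_pos (-1 : ℝ)]
        _ = Real.exp t := by rw [← Real.exp_add]; ring_nf
    have h2 : (1:ℝ)/3 ≤ Real.exp (-1) := by
      rw [Real.exp_neg]
      have := Real.exp_one_lt_d9
      rw [le_inv_comm₀] <;> nlinarith [Real.exp_pos 1]
    have h3 : Real.exp (-1) ≤ 1 := by
      rw [show (1:ℝ) = Real.exp 0 by simp]; exact Real.exp_le_exp.mpr (by norm_num)
    nlinarith

lemma key_lb {lam v : ℝ} (hlam : 1 ≤ lam) :
    Real.exp (-lam * (Real.exp (v / Real.sqrt lam) - v / Real.sqrt lam - 1)) ≤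
      Real.exp (-(1/4) * v^2) + Real.exp (-(1/4) * |v|) := by
  set s := Real.sqrt lam with hsdef
  have hlam0 : (0:ℝ) ≤ lam := le_trans zero_le_one hlam
  have hs1 : 1 ≤ s := by
    rw [hsdef, show (1:ℝ) = Real.sqrt 1 by simp]
    exact Real.sqrt_le_sqrt hlam
  have hs0 : 0 < s := lt_of_lt_of_le one_pos hs1
  have hss : s * s = lam := Real.mul_self_sqrt hlam0
  set t := v / s with htdef
  have hvt : v = s * t := by rw [htdef]; field_simp
  rcases le_or_gt (-1) t with h1 | h1
  · have hq : t^2/4 ≤ Real.exp t - t - 1 := by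
      rcases le_or_gt t 1 with h2 | h2
      · exact lower_quad (abs_le.mpr ⟨h1, h2⟩)
      · exact lq_pos (le_of_lt (lt_trans one_pos h2))
    have hkey : v^2/4 ≤ lam * (Real.exp t - t - 1) := by
      have h5 := mul_le_mul_of_nonneg_left hq hlam0
      have : v^2 = lam * t^2 := by rw [hvt, ← hss]; ring
      rw [this]; linarith
    have : Real.exp (-lam * (Real.exp t - t - 1)) ≤ Real.exp (-(1/4) * v^2) := by
      apply Real.exp_le_exp.mpr; linarith
    exact this.trans (le_add_of_nonneg_right (Real.exp_pos _).le)
  · have hq : -t/4 ≤ Real.exp t - t - 1 := lower_lin h1.le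
    have hv_neg : v < 0 := by
      rw [hvt]; exact mul_neg_of_pos_of_neg hs0 (lt_trans h1 (by norm_num))
    have habs : |v| = -v := abs_of_neg hv_neg
    have hkey : |v|/4 ≤ lam * (Real.exp t - t - 1) := by
      have h5 := mul_le_mul_of_nonneg_left hq hlam0
      have h6 : lam * (-t/4) = s * (-v) / 4 := by rw [hvt, ← hss]; ring
      have h7 : -v ≤ s * (-v) := le_mul_of_one_le_left (by linarith) hs1
      rw [habs]; linarith
    have : Real.exp (-lam * (Real.exp t - t - 1)) ≤ Real.exp (-(1/4) * |v|) := by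
      apply Real.exp_le_exp.mpr; linarith
    exact this.trans (le_add_of_nonneg_left (Real.exp_pos _).le)

lemma tendsto_exponent (v : ℝ) :
    Tendsto (fun lam : ℝ => lam * (Real.exp (v / Real.sqrt lam) - v / Real.sqrt lam - 1))
      atTop (𝓝 (v^2/2)) := by
  have hsq : Tendsto Real.sqrt atTop atTop := by
    rw [tendsto_atTop]
    intro b
    filter_upwards [eventually_ge_atTop (b * b)] with x hx
    calc b ≤ |b| := le_abs_self b
      _ = Real.sqrt (b * b) := (Real.sqrt_mul_self_eq_abs b).symm
      _ ≤ Real.sqrt x := Real.sqrt_le_sqrt hx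
  have hb : Tendsto (fun lam : ℝ => (2/9) * |v|^3 / Real.sqrt lam) atTop (𝓝 0) :=
    Tendsto.div_atTop tendsto_const_nhds hsq
  have hdiff : Tendsto (fun lam : ℝ =>
      lam * (Real.exp (v / Real.sqrt lam) - v / Real.sqrt lam - 1) - v^2/2) atTop (𝓝 0) := by
    apply squeeze_zero_norm' _ hb
    filter_upwards [eventually_ge_atTop (max 1 (v^2))] with lam hlam
    have hlam1 : (1:ℝ) ≤ lam := le_trans (le_max_left _ _) hlam
    have hlam0 : (0:ℝ) < lam := lt_of_lt_of_le one_pos hlam1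
    set s := Real.sqrt lam with hsdef
    have hs1 : 1 ≤ s := by
      rw [hsdef, show (1:ℝ) = Real.sqrt 1 by simp]
      exact Real.sqrt_le_sqrt hlam1
    have hs0 : 0 < s := lt_of_lt_of_le one_pos hs1
    have hss : s * s = lam := Real.mul_self_sqrt hlam0.le
    set t := v / s with htdef
    have ht1 : |t| ≤ 1 := by
      rw [htdef, abs_div, abs_of_pos hs0, div_le_one hs0]
      have : v^2 ≤ lam := le_trans (le_max_right _ _) hlam
      nlinarith [abs_nonneg v, sq_abs v]
    have htay := taylor2 ht1
    have hv2 : v^2/2 = lam * (t^2/2) := by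
      rw [htdef, ← hss]; field_simp
    have hexp : lam * (Real.exp t - t - 1) - v^2/2 = lam * (Real.exp t - t - 1 - t^2/2) := by
      rw [hv2]; ring
    rw [Real.norm_eq_abs, hexp, abs_mul, abs_of_pos hlam0]
    have habs3 : |t|^3 = |v|^3 / (s * s * s) := by
      rw [htdef, abs_div, abs_of_pos hs0, div_pow]
      ring
    calc lam * |Real.exp t - t - 1 - t^2/2| ≤ lam * (|t|^3 * (2/9)) := by
          exact mul_le_mul_of_nonneg_left htay hlam0.le
      _ = (2/9) * |v|^3 / s := by
          rw [habs3, ← hss]; field_simp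
  have := hdiff.add_const (v^2/2)
  simpa using this

open Set in
lemma bound_integrable :
    Integrable (fun v : ℝ => Real.exp (-(1/4) * v^2) + Real.exp (-(1/4) * |v|)) := by
  apply Integrable.add
  · exact integrable_exp_neg_mul_sq (by norm_num)
  · have hIoi : IntegrableOn (fun v : ℝ => Real.exp (-(1/4) * |v|)) (Ioi 0) := by
      apply (exp_neg_integrableOn_Ioi 0 (by norm_num : (0:ℝ) < 1/4)).congr_fun
        (fun x hx => by simp [abs_of_pos (mem_Ioi.mp hx)]) measurableSet_Ioi
    have hIic : IntegrableOn (fun v : ℝ => Real.exp (-(1/4) * |v|)) (Iic 0) := by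
      rw [← (Measure.measurePreserving_neg (volume : Measure ℝ)).integrableOn_comp_preimage
          (Homeomorph.neg ℝ).measurableEmbedding]
      simp only [Function.comp_def, abs_neg, neg_preimage, neg_Iic, neg_zero]
      rw [integrableOn_Ici_iff_integrableOn_Ioi]
      exact hIoi
    rw [← integrableOn_univ, ← Iic_union_Ioi (a := (0:ℝ)), integrableOn_union]
    exact ⟨hIic, hIoi⟩

/-- **Laplace asymptotics**: `√λ · ∫_ℝ exp (-λ (e^u - u - 1)) du → √(2π)`
as `λ → +∞`. -/
theorem laplace_asymptotics_exp_sub_linear :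
    Tendsto (fun lam : ℝ =>
        Real.sqrt lam * ∫ u : ℝ, Real.exp (-lam * (Real.exp u - u - 1)))
      atTop (nhds (Real.sqrt (2 * Real.pi))) := by
  have hgauss : ∫ v : ℝ, Real.exp (-(1/2) * v^2) = Real.sqrt (2 * Real.pi) := by
    rw [integral_gaussian]
    rw [show Real.pi / (1/2) = 2 * Real.pi by ring]
  have key : Tendsto (fun lam : ℝ =>
      ∫ v : ℝ, Real.exp (-lam * (Real.exp (v / Real.sqrt lam) - v / Real.sqrt lam - 1)))
      atTop (𝓝 (∫ v : ℝ, Real.exp (-(1/2) * v^2))) := by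
    apply tendsto_integral_filter_of_dominated_convergence
      (fun v => Real.exp (-(1/4) * v^2) + Real.exp (-(1/4) * |v|))
    · filter_upwards with lam
      apply Continuous.aestronglyMeasurable
      fun_prop
    · filter_upwards [eventually_ge_atTop (1:ℝ)] with lam hlam
      apply ae_of_all
      intro v
      rw [Real.norm_eq_abs, abs_of_pos (Real.exp_pos _)]
      exact key_lb hlam
    · exact bound_integrable
    · apply ae_of_all
      intro v
      have h2 := (Real.continuous_exp.tendsto _).comp (tendsto_exponent v).neg
      simp only [Function.comp_def] at h2
      have h3 : -(1/2) * v^2 = -(v^2/2) := by ring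
      rw [h3]
      exact h2.congr (fun lam => by rw [neg_mul])
  have heq : ∀ᶠ lam in atTop,
      Real.sqrt lam * ∫ u : ℝ, Real.exp (-lam * (Real.exp u - u - 1)) =
      ∫ v : ℝ, Real.exp (-lam * (Real.exp (v / Real.sqrt lam) - v / Real.sqrt lam - 1)) := by
    filter_upwards [eventually_gt_atTop (0:ℝ)] with lam hlam
    rw [MeasureTheory.Measure.integral_comp_div
      (fun u => Real.exp (-lam * (Real.exp u - u - 1))) (Real.sqrt lam),
      abs_of_nonneg (Real.sqrt_nonneg _), smul_eq_mul]
  have := key.congr' (EventuallyEq.symm heq)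
  rwa [hgauss] at this
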